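/- Let t0 be a real number, let g : [t0,∞) → [0,∞) be a monotone (either non-increasing or non-decreasing) function of class C¹, and set G(t) = ∫_{t0}^t g(τ) dτ. Assume there exists a constant Λ4 such that |g'(t)| ≤ Λ4·g(t) for all t ≥ t0. Then there exist constants Γ1 and Γ2 such that g(t) ≤ Γ1·G(t) for every t ≥ t0 + 1, and G(t+1) ≤ Γ2·G(t) for every t ≥ t0 + 1. -/

import Mathlib

open Real Set MeasureTheory

theorem integral_comparison_of_exponential_growth_bound
    (t0 Λ4 : ℝ) (g g' : ℝ → ℝ)
    (hg_nonneg : ∀ t ∈ Ici t0, 0 ≤ g t)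
    (hg_mono : MonotoneOn g (Ici t0) ∨ AntitoneOn g (Ici t0))
    (hg1 : ∀ t ∈ Ici t0, HasDerivWithinAt g (g' t) (Ici t0) t)
    (hg1cont : ContinuousOn g' (Ici t0))
    (hΛ4 : ∀ t ∈ Ici t0, |g' t| ≤ Λ4 * g t) :
    ∃ Γ1 Γ2 : ℝ,
      (∀ t ≥ t0 + 1, g t ≤ Γ1 * ∫ τ in t0..t, g τ) ∧
      (∀ t ≥ t0 + 1, (∫ τ in t0..(t + 1), g τ) ≤ Γ2 * ∫ τ in t0..t, g τ) := by
  set Λ := max Λ4 0 with hΛdef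
  have hΛ0 : 0 ≤ Λ := le_max_right _ _
  have hbound : ∀ t ∈ Ici t0, |g' t| ≤ Λ * g t := fun t ht =>
    (hΛ4 t ht).trans (mul_le_mul_of_nonneg_right (le_max_left _ _) (hg_nonneg t ht))
  have hgcont : ContinuousOn g (Ici t0) := fun t ht => (hg1 t ht).continuousWithinAt
  -- h2 : g t * exp (-(Λ * t)) is antitone on Ici t0
  have h2 : AntitoneOn (fun t => g t * Real.exp (-(Λ * t))) (Ici t0) := by
    apply antitoneOn_of_hasDerivWithinAt_nonpos (convex_Ici t0)
      (f' := fun t => (g' t - Λ * g t) * Real.exp (-(Λ * t)))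
    · exact hgcont.mul ((Real.continuous_exp.comp
        ((continuous_const.mul continuous_id).neg)).continuousOn)
    · intro x hx
      rw [interior_Ici] at hx ⊢
      have hd : HasDerivAt g (g' x) x := (hg1 x (mem_Ici.mpr (le_of_lt (mem_Ioi.mp hx)))).hasDerivAt (Ici_mem_nhds hx)
      have he : HasDerivAt (fun t : ℝ => Real.exp (-(Λ * t))) (-Λ * Real.exp (-(Λ * x))) x := by
        have h1 : HasDerivAt (fun t : ℝ => -(Λ * t)) (-Λ) x := by
          simpa using ((hasDerivAt_id x).const_mul Λ).fun_neg
        simpa [mul_comm, Function.comp_def] using (Real.hasDerivAt_exp (-(Λ * x))).comp x h1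
      have := (hd.fun_mul he).hasDerivWithinAt (s := Ioi t0)
      refine this.congr_deriv ?_
      ring
    · intro x hx
      rw [interior_Ici] at hx
      have h := (abs_le.mp (hbound x (mem_Ici.mpr (le_of_lt (mem_Ioi.mp hx))))).2
      have hnn : g' x - Λ * g x ≤ 0 := by linarith
      exact mul_nonpos_of_nonpos_of_nonneg hnn (Real.exp_pos _).le
  -- key inequality: g t ≤ g s * exp (Λ * (t - s)) for t0 ≤ s ≤ t
  have key : ∀ s t : ℝ, t0 ≤ s → s ≤ t → g t ≤ g s * Real.exp (Λ * (t - s)) := by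
    intro s t hs hst
    have h := h2 hs (hs.trans hst) hst
    calc g t = g t * Real.exp (-(Λ * t)) * Real.exp (Λ * t) := by
            rw [mul_assoc, ← Real.exp_add]; simp
      _ ≤ g s * Real.exp (-(Λ * s)) * Real.exp (Λ * t) :=
            mul_le_mul_of_nonneg_right h (Real.exp_pos _).le
      _ = g s * Real.exp (Λ * (t - s)) := by
            rw [mul_assoc, ← Real.exp_add]; ring_nf
  have hgint : ∀ a b : ℝ, t0 ≤ a → a ≤ b → IntervalIntegrable g volume a b := by
    intro a b ha hab
    apply (hgcont.mono _).intervalIntegrable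
    rw [uIcc_of_le hab]
    exact fun x hx => ha.trans hx.1
  -- Part 1
  have part1 : ∀ t ≥ t0 + 1, g t ≤ Real.exp Λ * ∫ τ in t0..t, g τ := by
    intro t ht
    have ht0 : t0 ≤ t - 1 := by linarith
    have ht1 : t - 1 ≤ t := by linarith
    have hsplit : (∫ τ in t0..(t-1), g τ) + (∫ τ in (t-1)..t, g τ) = ∫ τ in t0..t, g τ :=
      intervalIntegral.integral_add_adjacent_intervals (hgint _ _ le_rfl ht0)
        (hgint _ _ ht0 ht1)
    have hfirst : 0 ≤ ∫ τ in t0..(t-1), g τ := by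
      apply intervalIntegral.integral_nonneg ht0
      intro u hu; exact hg_nonneg u hu.1
    have hsecond : g t * Real.exp (-Λ) ≤ ∫ τ in (t-1)..t, g τ := by
      have hconst : (∫ _ in (t-1)..t, g t * Real.exp (-Λ)) = g t * Real.exp (-Λ) := by
        simp
      rw [← hconst]
      apply intervalIntegral.integral_mono_on ht1 (intervalIntegrable_const)
        (hgint _ _ ht0 ht1)
      intro τ hτ
      have hτ0 : t0 ≤ τ := ht0.trans hτ.1
      have h1 : g t ≤ g τ * Real.exp (Λ * (t - τ)) := key τ t hτ0 hτ.2
      have h2' : Real.exp (Λ * (t - τ)) ≤ Real.exp Λ := by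
        apply Real.exp_le_exp.2
        nlinarith [hτ.1, hτ.2]
      have h3 : g t ≤ g τ * Real.exp Λ :=
        h1.trans (mul_le_mul_of_nonneg_left h2' (hg_nonneg τ hτ0))
      have := mul_le_mul_of_nonneg_right h3 (Real.exp_pos (-Λ)).le
      calc g t * Real.exp (-Λ) ≤ g τ * Real.exp Λ * Real.exp (-Λ) := this
        _ = g τ := by rw [mul_assoc, ← Real.exp_add]; simp
    have hG : g t * Real.exp (-Λ) ≤ ∫ τ in t0..t, g τ := by
      rw [← hsplit]; linarith
    have := mul_le_mul_of_nonneg_left hG (Real.exp_pos Λ).le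
    calc g t = Real.exp Λ * (g t * Real.exp (-Λ)) := by
          rw [mul_comm (g t), ← mul_assoc, ← Real.exp_add]; simp
      _ ≤ Real.exp Λ * ∫ τ in t0..t, g τ := this
  refine ⟨Real.exp Λ, 1 + Real.exp Λ * Real.exp Λ, part1, ?_⟩
  intro t ht
  have ht0 : t0 ≤ t := by linarith
  have ht1 : t ≤ t + 1 := by linarith
  have hsplit : (∫ τ in t0..t, g τ) + (∫ τ in t..(t+1), g τ) = ∫ τ in t0..(t+1), g τ :=
    intervalIntegral.integral_add_adjacent_intervals (hgint _ _ le_rfl ht0)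
      (hgint _ _ ht0 ht1)
  have htail : (∫ τ in t..(t+1), g τ) ≤ g t * Real.exp Λ := by
    have hconst : (∫ _ in t..(t+1), g t * Real.exp Λ) = g t * Real.exp Λ := by simp
    rw [← hconst]
    apply intervalIntegral.integral_mono_on ht1 (hgint _ _ ht0 ht1)
      intervalIntegrable_const
    intro τ hτ
    have h1 : g τ ≤ g t * Real.exp (Λ * (τ - t)) := key t τ ht0 hτ.1
    have h2' : Real.exp (Λ * (τ - t)) ≤ Real.exp Λ := by
      apply Real.exp_le_exp.2
      nlinarith [hτ.1, hτ.2]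
    exact h1.trans (mul_le_mul_of_nonneg_left h2' (hg_nonneg t ht0))
  have hgt : g t ≤ Real.exp Λ * ∫ τ in t0..t, g τ := part1 t ht
  have hexp : 0 < Real.exp Λ := Real.exp_pos Λ
  rw [← hsplit]
  have : g t * Real.exp Λ ≤ Real.exp Λ * Real.exp Λ * ∫ τ in t0..t, g τ := by
    calc g t * Real.exp Λ ≤ (Real.exp Λ * ∫ τ in t0..t, g τ) * Real.exp Λ :=
          mul_le_mul_of_nonneg_right hgt hexp.le
      _ = Real.exp Λ * Real.exp Λ * ∫ τ in t0..t, g τ := by ring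
  linarith
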